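/- Let p = {p_n}_{n=0}^∞ be a sequence of real numbers whose Toeplitz matrix T_p is TN_2. Then (p^A)_b (p^B)_a ≤ (p^A)_a (p^B)_b for all integers A ≥ B ≥ 0 and a ≥ b ≥ 0, where (p^i)_j is the coefficient of x^j in p(x)^i. -/

import Mathlib

open Finset

noncomputable section

/-- The ℕ×ℕ Toeplitz matrix of a sequence `p`, with `(T_p)_{i,j} = p_{j-i}`
(and `0` when `j < i`, i.e. `p_n = 0` for negative `n`). -/
def toeplitz (p : ℕ → ℝ) : Matrix ℕ ℕ ℝ :=
  fun i j => if i ≤ j then p (j - i) else 0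

/-- A matrix is totally non-negative of order `k` iff every minor of size at
most `k` (rows and columns chosen strictly increasingly) is non-negative. -/
def IsTN (k : ℕ) (M : Matrix ℕ ℕ ℝ) : Prop :=
  ∀ l : ℕ, l ≤ k → ∀ r c : Fin l → ℕ, StrictMono r → StrictMono c →
    0 ≤ (M.submatrix r c).det

/-- A matrix is totally positive of order `k` iff every minor of size at
most `k` is positive. -/
def IsTP (k : ℕ) (M : Matrix ℕ ℕ ℝ) : Prop :=
  ∀ l : ℕ, l ≤ k → ∀ r c : Fin l → ℕ, StrictMono r → StrictMono c →
    0 < (M.submatrix r c).det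

/-- The matrix `S_p` with `(S_p)_{i,j} = (p^i)_j`, the coefficient of `x^j` in
`p(x)^i` where `p(x) = Σ p_n x^n` (and `p(x)^0 = 1`). -/
def sMatrix (p : ℕ → ℝ) : Matrix ℕ ℕ ℝ :=
  fun i j => PowerSeries.coeff j (PowerSeries.mk p ^ i)

/-- A partition: a non-increasing function from the positive integers to ℕ with
finite support (we set the irrelevant value at `0` to be `0`). -/
structure PartitionSeq where
  part : ℕ → ℕ
  zero : part 0 = 0
  antitone : ∀ ⦃i j : ℕ⦄, 1 ≤ i → i ≤ j → part j ≤ part i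
  finSupp : (Function.support part).Finite

/-- The weight `|λ|` of a partition. -/
def PartitionSeq.weight (lam : PartitionSeq) : ℕ := ∑ᶠ i, lam.part i

/-- `λ` dominates `μ`: equal weights and partial sums of `λ` are at least
those of `μ`. -/
def PartitionSeq.Dominates (lam mu : PartitionSeq) : Prop :=
  lam.weight = mu.weight ∧
  ∀ j : ℕ, 1 ≤ j →
    ∑ i ∈ Finset.Icc 1 j, mu.part i ≤ ∑ i ∈ Finset.Icc 1 j, lam.part i

/-- `f(λ, p(x), t, x) = ∏_i (p(x)^{λ(i)} |_t)`, the product over rows of the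
truncations to degree `t` of powers of the generating function. -/
def fPoly (lam : PartitionSeq) (p : ℕ → ℝ) (t : ℕ) : Polynomial ℝ :=
  ∏ᶠ i : ℕ, PowerSeries.trunc (t + 1) (PowerSeries.mk p ^ lam.part i)

/-- `P(E(λ,X,j,t))` for `X` with probability mass function `p`: the coefficient
of `x^j` in `∏_i ((p_X(x))^{λ(i)} |_t)`. -/
def probE (p : ℕ → ℝ) (lam : PartitionSeq) (j t : ℕ) : ℝ :=
  (fPoly lam p t).coeff j

/-- Condition `C(λ,μ,X)`: `P(E(λ,X,j,t)) ≤ P(E(μ,X,j,t))` for all `j, t ∈ ℕ`. -/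
def CondC (p : ℕ → ℝ) (lam mu : PartitionSeq) : Prop :=
  ∀ j t : ℕ, probE p lam j t ≤ probE p mu j t

-- auxiliary development, to be inserted before the theorem

/-- Two-by-two total nonnegativity of the Toeplitz matrix, in a convenient form. -/
def TN2seq (q : ℕ → ℝ) : Prop :=
  ∀ r1 r2 j1 j2 : ℕ, r1 ≤ r2 → j1 ≤ j2 →
    toeplitz q r1 j2 * toeplitz q r2 j1 ≤ toeplitz q r1 j1 * toeplitz q r2 j2

/-- Convolution of two sequences. -/
def convSeq (q r : ℕ → ℝ) (n : ℕ) : ℝ := ∑ i ∈ Finset.range (n + 1), q i * r (n - i)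

lemma toeplitz_of_le (q : ℕ → ℝ) {i j : ℕ} (h : i ≤ j) : toeplitz q i j = q (j - i) :=
  if_pos h

lemma toeplitz_of_gt (q : ℕ → ℝ) {i j : ℕ} (h : j < i) : toeplitz q i j = 0 :=
  if_neg (by omega)

lemma nonneg_of_isTN {p : ℕ → ℝ} (h : IsTN 2 (toeplitz p)) (n : ℕ) : 0 ≤ p n := by
  have := h 1 one_le_two (fun _ => 0) (fun _ => n)
    (Subsingleton.strictMono _) (Subsingleton.strictMono _)
  simpa [Matrix.det_fin_one, toeplitz] using this

lemma tn2_of_isTN {p : ℕ → ℝ} (h : IsTN 2 (toeplitz p)) : TN2seq p := by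
  intro r1 r2 j1 j2 hr hj
  rcases hr.lt_or_eq with hr | rfl
  · rcases hj.lt_or_eq with hj | rfl
    · have hm1 : StrictMono ![r1, r2] := by
        intro i j hij
        fin_cases i <;> fin_cases j <;> simp_all
      have hm2 : StrictMono ![j1, j2] := by
        intro i j hij
        fin_cases i <;> fin_cases j <;> simp_all
      have := h 2 le_rfl ![r1, r2] ![j1, j2] hm1 hm2
      rw [Matrix.det_fin_two] at this
      simp only [Matrix.submatrix_apply, Matrix.cons_val_zero, Matrix.cons_val_one,
        Matrix.head_cons] at this
      linarith
    · exact le_rfl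
  · exact (mul_comm _ _).le

lemma toeplitz_conv (q r : ℕ → ℝ) {N j : ℕ} (hj : j < N) (i : ℕ) :
    toeplitz (convSeq q r) i j = ∑ k ∈ Finset.range N, toeplitz q i k * toeplitz r k j := by
  rcases le_or_gt i j with hij | hij
  · have hsub : Finset.Icc i j ⊆ Finset.range N := by
      intro k hk
      simp only [Finset.mem_Icc] at hk
      simp only [Finset.mem_range]
      omega
    have h1 : ∀ k ∈ Finset.range N, toeplitz q i k * toeplitz r k j
        = if k ∈ Finset.Icc i j then q (k - i) * r (j - k) else 0 := by
      intro k _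
      rcases le_or_gt i k with h2 | h2
      · rcases le_or_gt k j with h3 | h3
        · rw [toeplitz_of_le q h2, toeplitz_of_le r h3, if_pos (Finset.mem_Icc.mpr ⟨h2, h3⟩)]
        · rw [toeplitz_of_gt r h3, mul_zero,
            if_neg (by simp only [Finset.mem_Icc]; omega : k ∉ Finset.Icc i j)]
      · rw [toeplitz_of_gt q h2, zero_mul,
          if_neg (by simp only [Finset.mem_Icc]; omega : k ∉ Finset.Icc i j)]
    rw [toeplitz_of_le _ hij, Finset.sum_congr rfl h1, Finset.sum_ite_mem,
      Finset.inter_eq_right.mpr hsub]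
    unfold convSeq
    refine Finset.sum_bij' (fun (k : ℕ) (_ : k ∈ Finset.range (j - i + 1)) => k + i)
      (fun (k : ℕ) (_ : k ∈ Finset.Icc i j) => k - i) ?_ ?_ ?_ ?_ ?_ <;>
      simp only [Finset.mem_range, Finset.mem_Icc]
    · intro k hk; omega
    · intro k hk; omega
    · intro k hk; omega
    · intro k hk; omega
    · intro k hk
      have e1 : k + i - i = k := by omega
      have e2 : j - (k + i) = j - i - k := by omega
      rw [e1, e2]
  · rw [toeplitz_of_gt _ hij]
    symm
    apply Finset.sum_eq_zero
    intro k _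
    rcases le_or_gt k j with h | h
    · rw [toeplitz_of_gt q (by omega : k < i), zero_mul]
    · rw [toeplitz_of_gt r h, mul_zero]

lemma double_sum_nonneg (s : Finset ℕ) (F : ℕ → ℕ → ℝ)
    (h : ∀ k l, 0 ≤ F k l + F l k) :
    0 ≤ ∑ k ∈ s, ∑ l ∈ s, F k l := by
  have h2 : ∑ k ∈ s, ∑ l ∈ s, F k l = ∑ k ∈ s, ∑ l ∈ s, F l k := Finset.sum_comm
  have h3 : 0 ≤ ∑ k ∈ s, ∑ l ∈ s, (F k l + F l k) :=
    Finset.sum_nonneg fun k _ => Finset.sum_nonneg fun l _ => h k l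
  simp only [Finset.sum_add_distrib] at h3
  linarith

lemma tn2_conv {q r : ℕ → ℝ} (hq : TN2seq q) (hr : TN2seq r) : TN2seq (convSeq q r) := by
  intro r1 r2 j1 j2 h1 h2
  have hj2 : j2 < j2 + 1 := by omega
  have hj1 : j1 < j2 + 1 := by omega
  rw [toeplitz_conv q r hj2 r1, toeplitz_conv q r hj1 r2,
    toeplitz_conv q r hj1 r1, toeplitz_conv q r hj2 r2]
  rw [← sub_nonneg, Finset.sum_mul_sum, Finset.sum_mul_sum]
  rw [← Finset.sum_sub_distrib]
  simp only [← Finset.sum_sub_distrib]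
  apply double_sum_nonneg
  have key : ∀ k l, k ≤ l →
      0 ≤ (toeplitz q r1 k * toeplitz r k j1 * (toeplitz q r2 l * toeplitz r l j2)
            - toeplitz q r1 k * toeplitz r k j2 * (toeplitz q r2 l * toeplitz r l j1))
          + (toeplitz q r1 l * toeplitz r l j1 * (toeplitz q r2 k * toeplitz r k j2)
            - toeplitz q r1 l * toeplitz r l j2 * (toeplitz q r2 k * toeplitz r k j1)) := by
    intro k l hkl
    have hQ := hq r1 r2 k l h1 hkl
    have hR := hr k l j1 j2 hkl h2
    nlinarith [mul_nonneg (sub_nonneg.mpr hQ) (sub_nonneg.mpr hR)]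
  intro k l
  rcases le_total k l with hkl | hkl
  · exact key k l hkl
  · have := key l k hkl
    linarith

lemma coeff_mul_eq_conv (φ ψ : PowerSeries ℝ) (n : ℕ) :
    PowerSeries.coeff n (φ * ψ)
      = convSeq (fun m => PowerSeries.coeff m φ) (fun m => PowerSeries.coeff m ψ) n := by
  rw [PowerSeries.coeff_mul, Finset.Nat.sum_antidiagonal_eq_sum_range_succ_mk]
  rfl

lemma tn2_pow {p : ℕ → ℝ} (hp : TN2seq p) (k : ℕ) :
    TN2seq (fun n => PowerSeries.coeff n (PowerSeries.mk p ^ k)) := by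
  induction k with
  | zero =>
    intro r1 r2 j1 j2 hr hj
    have he : ∀ i j : ℕ,
        toeplitz (fun n => PowerSeries.coeff n (PowerSeries.mk p ^ 0)) i j
          = if i = j then 1 else 0 := by
      intro i j
      rcases eq_or_ne i j with rfl | hne
      · rw [toeplitz_of_le _ le_rfl]
        simp [PowerSeries.coeff_one]
      · rw [if_neg hne]
        rcases le_or_gt i j with h | h
        · rw [toeplitz_of_le _ h]
          simp only [pow_zero, PowerSeries.coeff_one]
          rw [if_neg (by omega)]
        · exact toeplitz_of_gt _ h
    rw [he, he, he, he]
    split_ifs <;> simp_all <;> omega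
  | succ k ih =>
    have heq : (fun n => PowerSeries.coeff n (PowerSeries.mk p ^ (k + 1)))
        = convSeq p (fun n => PowerSeries.coeff n (PowerSeries.mk p ^ k)) := by
      funext n
      rw [pow_succ', coeff_mul_eq_conv]
      simp [convSeq, PowerSeries.coeff_mk]
    rw [heq]
    exact tn2_conv hp ih

lemma coeff_pow_nonneg {p : ℕ → ℝ} (hp : ∀ n, 0 ≤ p n) (k n : ℕ) :
    0 ≤ PowerSeries.coeff n (PowerSeries.mk p ^ k) := by
  induction k generalizing n with
  | zero =>
    simp only [pow_zero, PowerSeries.coeff_one]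
    split <;> norm_num
  | succ k ih =>
    rw [pow_succ', coeff_mul_eq_conv]
    exact Finset.sum_nonneg fun i _ =>
      mul_nonneg (by simpa using hp i) (ih _)

/-- **Key inequality.** If `T_p ∈ TN₂` then
`(p^A)_b (p^B)_a ≤ (p^A)_a (p^B)_b` for all `A ≥ B ≥ 0` and `a ≥ b ≥ 0`. -/
theorem power_coeff_ineq (p : ℕ → ℝ) (hTN : IsTN 2 (toeplitz p))
    (A B a b : ℕ) (hAB : B ≤ A) (hab : b ≤ a) :
    PowerSeries.coeff b (PowerSeries.mk p ^ A) *
        PowerSeries.coeff a (PowerSeries.mk p ^ B) ≤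
      PowerSeries.coeff a (PowerSeries.mk p ^ A) *
        PowerSeries.coeff b (PowerSeries.mk p ^ B) := by
  have hp2 : TN2seq p := tn2_of_isTN hTN
  have hp0 : ∀ n, 0 ≤ p n := nonneg_of_isTN hTN
  have hBtn : TN2seq (fun n => PowerSeries.coeff n (PowerSeries.mk p ^ B)) := tn2_pow hp2 B
  have hA : ∀ m, PowerSeries.coeff m (PowerSeries.mk p ^ A)
      = convSeq (fun n => PowerSeries.coeff n (PowerSeries.mk p ^ (A - B)))
          (fun n => PowerSeries.coeff n (PowerSeries.mk p ^ B)) m := by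
    intro m
    have hpow : PowerSeries.mk p ^ A = PowerSeries.mk p ^ (A - B) * PowerSeries.mk p ^ B := by
      rw [← pow_add]
      congr 1
      omega
    rw [hpow, coeff_mul_eq_conv]
  set qC : ℕ → ℝ := fun n => PowerSeries.coeff n (PowerSeries.mk p ^ (A - B)) with hqC
  set qB : ℕ → ℝ := fun n => PowerSeries.coeff n (PowerSeries.mk p ^ B) with hqB
  have key : ∀ m, m ≤ a → convSeq qC qB m
      = ∑ k ∈ Finset.range (a + 1), qC k * toeplitz qB k m := by
    intro m hm
    have h0 := toeplitz_conv qC qB (show m < a + 1 by omega) 0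
    rw [toeplitz_of_le _ (Nat.zero_le m), Nat.sub_zero] at h0
    rw [h0]
    refine Finset.sum_congr rfl fun k _ => ?_
    rw [toeplitz_of_le _ (Nat.zero_le k), Nat.sub_zero]
  have hga : PowerSeries.coeff a (PowerSeries.mk p ^ A)
      = ∑ k ∈ Finset.range (a + 1), qC k * toeplitz qB k a := by
    rw [hA a]; exact key a le_rfl
  have hgb : PowerSeries.coeff b (PowerSeries.mk p ^ A)
      = ∑ k ∈ Finset.range (a + 1), qC k * toeplitz qB k b := by
    rw [hA b]; exact key b hab
  have hqa : PowerSeries.coeff a (PowerSeries.mk p ^ B) = qB a := rfl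
  have hqb : PowerSeries.coeff b (PowerSeries.mk p ^ B) = qB b := rfl
  rw [hga, hgb, hqa, hqb, Finset.sum_mul, Finset.sum_mul]
  apply Finset.sum_le_sum
  intro k _
  have h1 : toeplitz qB 0 a * toeplitz qB k b ≤ toeplitz qB 0 b * toeplitz qB k a :=
    hBtn 0 k b a (Nat.zero_le k) hab
  rw [toeplitz_of_le _ (Nat.zero_le a), toeplitz_of_le _ (Nat.zero_le b),
    Nat.sub_zero, Nat.sub_zero] at h1
  have h0 : 0 ≤ qC k := coeff_pow_nonneg hp0 _ _
  calc qC k * toeplitz qB k b * qB a = qC k * (qB a * toeplitz qB k b) := by ring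
    _ ≤ qC k * (qB b * toeplitz qB k a) := by
        exact mul_le_mul_of_nonneg_left h1 h0
    _ = qC k * toeplitz qB k a * qB b := by ring
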